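/- Let f : J → ℂⁿ have property (A) on an interval J, let Λ : C(I,ℂⁿ) → Y be continuous linear, and let a < b lie in a subinterval J₀ such that [t-h,t] ⊂ J for all t ∈ J₀. Then the weak-star integral ∫_{(a,b)} Λ_E f_t dm(t) exists, belongs to Y**, and satisfies |∫_{(a,b)} Λ_E f_t dm(t)| ≤ (b-a) ‖Λ‖ sup_{a-h<t<b} |f(t)|. -/

import Mathlib

open MeasureTheory Filter Topology

lemma trunc_exists {E : Type*} [NormedAddCommGroup E] [NormedSpace ℝ E] {M : ℝ} (hM : 0 ≤ M) :
    ∃ ρ : E → E, Continuous ρ ∧ (∀ v, ‖ρ v‖ ≤ M) ∧ (∀ v, ‖v‖ ≤ M → ρ v = v) := by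
  rcases hM.eq_or_lt with hM0 | hMpos
  · refine ⟨fun _ => 0, continuous_const, fun v => by simp [← hM0], fun v hv => ?_⟩
    have : v = 0 := by simpa [← hM0] using norm_le_zero_iff.1 (by simpa [← hM0] using hv)
    simp [this]
  · refine ⟨fun v => (M / max M ‖v‖) • v, ?_, fun v => ?_, fun v hv => ?_⟩
    · exact (continuous_const.div (continuous_const.max continuous_norm)
        (fun v => ne_of_gt (lt_max_of_lt_left hMpos))).smul continuous_id
    · have hmax : 0 < max M ‖v‖ := lt_max_of_lt_left hMpos
      rw [norm_smul, Real.norm_eq_abs, abs_of_nonneg (div_nonneg hM hmax.le),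
        div_mul_eq_mul_div, div_le_iff₀ hmax]
      exact mul_le_mul_of_nonneg_left (le_max_right _ _) hM
    · show (M / max M ‖v‖) • v = v
      rw [max_eq_left hv, div_self (ne_of_gt hMpos), one_smul]

/-- Property (A): pointwise limit of a uniformly bounded sequence of continuous maps. -/
def PropA {X : Type*} [TopologicalSpace X] {E : Type*} [NormedAddCommGroup E]
    (φ : X → E) : Prop :=
  ∃ f : ℕ → X → E, (∀ m, Continuous (f m)) ∧ (∃ C : ℝ, ∀ m x, ‖f m x‖ ≤ C) ∧
    ∀ x, Tendsto (fun m => f m x) atTop (𝓝 (φ x))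

/-- If `f : J → ℂⁿ` has property (A), `Λ : C(I,ℂⁿ) → Y` is
continuous linear (with canonical extension `Λ_E` to `B_{nA}`, characterized by
bounded pointwise approximation), and `a < b` lie in a subinterval `J₀` with
`[t-h,t] ⊆ J` for all `t ∈ J₀`, then the weak-star integral
`∫_{(a,b)} Λ_E f_t dm(t)` exists, belongs to `Y**`, and
`‖∫_{(a,b)} Λ_E f_t dm(t)‖ ≤ (b-a)·‖Λ‖·sup_{a-h<t<b}‖f t‖`. -/
theorem stmt_10 (n : ℕ) (h : ℝ) (hh : 0 < h)
    (Y : Type*) [NormedAddCommGroup Y] [NormedSpace ℂ Y]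
    (T : C(Set.Icc (-h) (0:ℝ), Fin n → ℂ) →L[ℂ] Y)
    (TE : (Set.Icc (-h) (0:ℝ) → Fin n → ℂ) → (Y →L[ℂ] ℂ) → ℂ)
    (hTE : ∀ (φ : Set.Icc (-h) (0:ℝ) → Fin n → ℂ)
        (fm : ℕ → C(Set.Icc (-h) (0:ℝ), Fin n → ℂ)),
      (∃ C : ℝ, ∀ m s, ‖fm m s‖ ≤ C) →
      (∀ s, Tendsto (fun m => fm m s) atTop (𝓝 (φ s))) →
      ∀ y : Y →L[ℂ] ℂ, Tendsto (fun m => y (T (fm m))) atTop (𝓝 (TE φ y)))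
    (J J₀ : Set ℝ) (hJ : J.OrdConnected) (hJ₀ : J₀.OrdConnected)
    (hJJ : ∀ t ∈ J₀, Set.Icc (t - h) t ⊆ J)
    (f : ℝ → Fin n → ℂ) (hf : PropA fun x : J => f x)
    (a b : ℝ) (ha : a ∈ J₀) (hb : b ∈ J₀) (hab : a < b) :
    ∃ F : (Y →L[ℂ] ℂ) →L[ℂ] ℂ,
      (∀ y : Y →L[ℂ] ℂ,
        IntegrableOn (fun t => TE (fun s : Set.Icc (-h) (0:ℝ) => f (t + ↑s)) y)
          (Set.Ioo a b) ∧
        F y = ∫ t in Set.Ioo a b, TE (fun s : Set.Icc (-h) (0:ℝ) => f (t + ↑s)) y) ∧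
      ‖F‖ ≤ (b - a) * ‖T‖ * ⨆ t : Set.Ioo (a - h) b, ‖f ↑t‖ := by
  classical
  obtain ⟨g, hgc, ⟨C, hC⟩, hgconv⟩ := hf
  -- basic membership facts
  have hIccJ₀ : Set.Icc a b ⊆ J₀ := hJ₀.out ha hb
  have haH : a - h ∈ J := hJJ a ha ⟨le_refl _, by linarith⟩
  have hbJ : b ∈ J := hJJ b hb ⟨by linarith, le_refl _⟩
  have hIccJ : Set.Icc (a - h) b ⊆ J := hJ.out haH hbJ
  have hfC : ∀ x (hx : x ∈ J), ‖f x‖ ≤ C := fun x hx =>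
    le_of_tendsto ((hgconv ⟨x, hx⟩).norm) (Eventually.of_forall fun m => hC m ⟨x, hx⟩)
  set M := ⨆ t : Set.Ioo (a - h) b, ‖f ↑t‖ with hM
  have hbdd : BddAbove (Set.range fun t : Set.Ioo (a - h) b => ‖f ↑t‖) := by
    refine ⟨C, ?_⟩
    rintro _ ⟨x, rfl⟩
    exact hfC _ (hIccJ (Set.Ioo_subset_Icc_self x.2))
  have hfM : ∀ x, x ∈ Set.Ioo (a - h) b → ‖f x‖ ≤ M := fun x hx =>
    le_ciSup hbdd (⟨x, hx⟩ : Set.Ioo (a - h) b)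
  have hM0 : 0 ≤ M := le_trans (norm_nonneg (f a)) (hfM a ⟨by linarith, hab⟩)
  obtain ⟨ρ, hρc, hρle, hρid⟩ := trunc_exists (E := Fin n → ℂ) hM0
  -- extended truncated approximants
  set G : ℕ → ℝ → (Fin n → ℂ) := fun m x => if hx : x ∈ J then ρ (g m ⟨x, hx⟩) else 0
    with hGdef
  have hGJ : ∀ m x (hx : x ∈ J), G m x = ρ (g m ⟨x, hx⟩) := fun m x hx => dif_pos hx
  have hGbd : ∀ m x, ‖G m x‖ ≤ M := by
    intro m x
    by_cases hx : x ∈ J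
    · rw [hGJ m x hx]; exact hρle _
    · simp only [hGdef, dif_neg hx, norm_zero]; exact hM0
  have hGcont : ∀ m, ContinuousOn (G m) J := by
    intro m
    rw [continuousOn_iff_continuous_restrict]
    have : J.domRestrict (G m) = fun x : J => ρ (g m x) :=
      funext fun x => dif_pos x.2
    rw [this]
    exact hρc.comp (hgc m)
  -- the window map
  have hsum_mem : ∀ (p : Set.Icc a b × Set.Icc (-h) (0:ℝ)), (↑p.1 + ↑p.2 : ℝ) ∈ J := by
    rintro ⟨⟨t, ht⟩, ⟨s, hs⟩⟩
    exact hJJ t (hIccJ₀ ht) ⟨by simp only; linarith [hs.1, hs.2], by simp only; linarith [hs.2]⟩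
  set W : ℕ → C(Set.Icc a b × Set.Icc (-h) (0:ℝ), Fin n → ℂ) := fun m =>
    ⟨fun p => G m (↑p.1 + ↑p.2),
     (hGcont m).comp_continuous
       ((continuous_subtype_val.comp continuous_fst).add
         (continuous_subtype_val.comp continuous_snd)) hsum_mem⟩ with hWdef
  -- key convergence fact
  have keyA : ∀ (t : ℝ) (ht : t ∈ Set.Ioo a b) (y : Y →L[ℂ] ℂ),
      Tendsto (fun m => y (T ((W m).curry ⟨t, Set.mem_Icc_of_Ioo ht⟩)))
        atTop (𝓝 (TE (fun s : Set.Icc (-h) (0:ℝ) => f (t + ↑s)) y)) := by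
    intro t ht y
    refine hTE _ _ ⟨M, fun m s => ?_⟩ (fun s => ?_) y
    · exact hGbd m (t + ↑s)
    · have hmemJ : t + ↑s ∈ J := hsum_mem (⟨t, Set.mem_Icc_of_Ioo ht⟩, s)
      have hIoo : t + ↑s ∈ Set.Ioo (a - h) b :=
        ⟨by linarith [ht.1, s.2.1], by linarith [ht.2, s.2.2]⟩
      have h1 : (fun m => ((W m).curry ⟨t, Set.mem_Icc_of_Ioo ht⟩) s) =
          fun m => ρ (g m ⟨t + ↑s, hmemJ⟩) := by
        funext m
        simp only [ContinuousMap.curry_apply]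
        exact hGJ m _ hmemJ
      rw [h1]
      have h2 : ρ (f (t + ↑s)) = f (t + ↑s) := hρid _ (hfM _ hIoo)
      have := (hρc.tendsto _).comp (hgconv ⟨t + ↑s, hmemJ⟩)
      rw [h2] at this
      exact this
  -- uniform bound on the integrand
  have hbound : ∀ (y : Y →L[ℂ] ℂ) (t : ℝ), t ∈ Set.Ioo a b →
      ‖TE (fun s : Set.Icc (-h) (0:ℝ) => f (t + ↑s)) y‖ ≤ ‖T‖ * M * ‖y‖ := by
    intro y t ht
    refine le_of_tendsto (keyA t ht y).norm (Eventually.of_forall fun m => ?_)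
    have h1 : ‖(W m).curry ⟨t, Set.mem_Icc_of_Ioo ht⟩‖ ≤ M :=
      ContinuousMap.norm_le _ hM0 |>.2 fun s => by
        exact hGbd m (t + ↑s)
    calc ‖y (T ((W m).curry ⟨t, Set.mem_Icc_of_Ioo ht⟩))‖
        ≤ ‖y‖ * ‖T ((W m).curry ⟨t, Set.mem_Icc_of_Ioo ht⟩)‖ := y.le_opNorm _
      _ ≤ ‖y‖ * (‖T‖ * ‖(W m).curry ⟨t, Set.mem_Icc_of_Ioo ht⟩‖) := by
          exact mul_le_mul_of_nonneg_left (T.le_opNorm _) (norm_nonneg y)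
      _ ≤ ‖y‖ * (‖T‖ * M) := by
          exact mul_le_mul_of_nonneg_left
            (mul_le_mul_of_nonneg_left h1 (norm_nonneg T)) (norm_nonneg y)
      _ = ‖T‖ * M * ‖y‖ := by ring
  -- integrability
  have hInt : ∀ y : Y →L[ℂ] ℂ,
      IntegrableOn (fun t => TE (fun s : Set.Icc (-h) (0:ℝ) => f (t + ↑s)) y)
        (Set.Ioo a b) := by
    intro y
    have hvm : ∀ m : ℕ, AEMeasurable
        (fun t : ℝ => y (T ((W m).curry (Set.projIcc a b hab.le t))))
        (volume.restrict (Set.Ioo a b)) :=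
      fun m => ((y.continuous.comp (T.continuous.comp
        ((W m).curry.continuous.comp continuous_projIcc))).measurable).aemeasurable
    have htend : ∀ᵐ t ∂(volume.restrict (Set.Ioo a b)),
        Tendsto (fun m => y (T ((W m).curry (Set.projIcc a b hab.le t)))) atTop
          (𝓝 (TE (fun s : Set.Icc (-h) (0:ℝ) => f (t + ↑s)) y)) := by
      refine (ae_restrict_iff' measurableSet_Ioo).2 (ae_of_all _ fun t ht => ?_)
      have hpr : Set.projIcc a b hab.le t = ⟨t, Set.mem_Icc_of_Ioo ht⟩ :=
        Set.projIcc_of_mem hab.le (Set.mem_Icc_of_Ioo ht)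
      rw [hpr]
      exact keyA t ht y
    have hmeas := aemeasurable_of_tendsto_metrizable_ae' hvm htend
    refine ⟨hmeas.aestronglyMeasurable, ?_⟩
    refine HasFiniteIntegral.of_bounded (C := ‖T‖ * M * ‖y‖) ?_
    exact (ae_restrict_iff' measurableSet_Ioo).2 (ae_of_all _ fun t ht => hbound y t ht)
  -- linearity of the integrand in y
  have hadd : ∀ (y₁ y₂ : Y →L[ℂ] ℂ) (t : ℝ), t ∈ Set.Ioo a b →
      TE (fun s : Set.Icc (-h) (0:ℝ) => f (t + ↑s)) (y₁ + y₂) =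
        TE (fun s : Set.Icc (-h) (0:ℝ) => f (t + ↑s)) y₁ +
          TE (fun s : Set.Icc (-h) (0:ℝ) => f (t + ↑s)) y₂ := by
    intro y₁ y₂ t ht
    refine tendsto_nhds_unique (keyA t ht (y₁ + y₂)) ?_
    have := (keyA t ht y₁).add (keyA t ht y₂)
    simpa only [ContinuousLinearMap.add_apply] using this
  have hsmul : ∀ (c : ℂ) (y : Y →L[ℂ] ℂ) (t : ℝ), t ∈ Set.Ioo a b →
      TE (fun s : Set.Icc (-h) (0:ℝ) => f (t + ↑s)) (c • y) =
        c * TE (fun s : Set.Icc (-h) (0:ℝ) => f (t + ↑s)) y := by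
    intro c y t ht
    refine tendsto_nhds_unique (keyA t ht (c • y)) ?_
    have := (keyA t ht y).const_mul c
    simpa only [ContinuousLinearMap.smul_apply, smul_eq_mul] using this
  -- the linear map
  set L : (Y →L[ℂ] ℂ) →ₗ[ℂ] ℂ :=
    { toFun := fun y => ∫ t in Set.Ioo a b, TE (fun s : Set.Icc (-h) (0:ℝ) => f (t + ↑s)) y
      map_add' := by
        intro y₁ y₂
        rw [← integral_add (hInt y₁) (hInt y₂)]
        refine setIntegral_congr_fun measurableSet_Ioo fun t ht => hadd y₁ y₂ t ht
      map_smul' := by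
        intro c y
        simp only [RingHom.id_apply, smul_eq_mul]
        rw [← integral_const_mul c (fun t => TE (fun s : Set.Icc (-h) (0:ℝ) => f (t + ↑s)) y)]
        refine setIntegral_congr_fun measurableSet_Ioo fun t ht => hsmul c y t ht } with hLdef
  have hvol : (volume (Set.Ioo a b)).toReal = b - a := by
    rw [Real.volume_Ioo, ENNReal.toReal_ofReal (by linarith)]
  have hLle : ∀ y : Y →L[ℂ] ℂ, ‖L y‖ ≤ ((b - a) * ‖T‖ * M) * ‖y‖ := by
    intro y
    have h1 : ‖L y‖ ≤ (‖T‖ * M * ‖y‖) * (volume (Set.Ioo a b)).toReal := by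
      refine norm_setIntegral_le_of_norm_le_const_ae ?_ ?_
      · rw [Real.volume_Ioo]; exact ENNReal.ofReal_lt_top
      · exact (ae_restrict_iff' measurableSet_Ioo).2 (ae_of_all _ fun t ht => hbound y t ht)
    rw [hvol] at h1
    calc ‖L y‖ ≤ (‖T‖ * M * ‖y‖) * (b - a) := h1
      _ = ((b - a) * ‖T‖ * M) * ‖y‖ := by ring
  have hKnn : 0 ≤ (b - a) * ‖T‖ * M :=
    mul_nonneg (mul_nonneg (by linarith) (norm_nonneg T)) hM0
  refine ⟨L.mkContinuous ((b - a) * ‖T‖ * M) hLle, fun y => ⟨hInt y, rfl⟩, ?_⟩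
  exact L.mkContinuous_norm_le hKnn hLle
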